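/- Let p_0, …, p_n (n ≥ 1) be the vertices of a left-turning polygonal arc in ℝ² with turning angles θ_1, …, θ_{n−1} ∈ (0, π) whose total curvature θ_1 + ⋯ + θ_{n−1} is at most π/2. Then the arc is radially monotone with respect to p_0; moreover for any two distinct points x, y on the arc such that x strictly precedes y in the traversal from p_0, one has ‖x − p_0‖ < ‖y − p_0‖ (in particular ‖p_j − p_0‖ < ‖p_k − p_0‖ whenever 0 ≤ j < k ≤ n). -/

import Mathlib

open Real Finset

/-- The planar cross product (2×2 determinant) of two vectors in `ℝ²`. -/
def detv (u v : EuclideanSpace ℝ (Fin 2)) : ℝ := u 0 * v 1 - u 1 * v 0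

/-- `p 0, …, p n` is a polygonal arc (consecutive vertices distinct) which is left-turning with
turning angles `θ 1, …, θ (n-1) ∈ (0, π)`: at each interior vertex the oriented angle from the
incoming edge direction to the outgoing edge direction equals `θ j`; for `θ j ∈ (0, π)` this is
equivalent to the cross product of the two edge directions being positive together with the
unoriented angle between them being `θ j`. -/
def IsLeftTurningArc (p : ℕ → EuclideanSpace ℝ (Fin 2)) (θ : ℕ → ℝ) (n : ℕ) : Prop :=
  (∀ j, j < n → p (j + 1) ≠ p j) ∧
  ∀ j, 1 ≤ j → j ≤ n - 1 →
    0 < θ j ∧ θ j < Real.pi ∧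
    0 < detv (p j - p (j - 1)) (p (j + 1) - p j) ∧
    InnerProductGeometry.angle (p j - p (j - 1)) (p (j + 1) - p j) = θ j

lemma inner2 (u v : EuclideanSpace ℝ (Fin 2)) : (inner ℝ u v : ℝ) = u 0 * v 0 + u 1 * v 1 := by
  simp [PiLp.inner_apply, Fin.sum_univ_two, RCLike.inner_apply, conj_trivial]; ring

lemma normsq2 (u : EuclideanSpace ℝ (Fin 2)) : ‖u‖^2 = u 0 ^2 + u 1 ^2 := by
  rw [← real_inner_self_eq_norm_sq, inner2]; ring

lemma rot_formula (u v : EuclideanSpace ℝ (Fin 2)) (θ : ℝ) (hu : u ≠ 0) (hv : v ≠ 0)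
    (hd : 0 < detv u v) (hθ1 : 0 < θ) (hθ2 : θ < Real.pi)
    (ha : InnerProductGeometry.angle u v = θ) :
    ‖u‖^2 * v 0 = ‖u‖ * ‖v‖ * (Real.cos θ * u 0 - Real.sin θ * u 1) ∧
    ‖u‖^2 * v 1 = ‖u‖ * ‖v‖ * (Real.sin θ * u 0 + Real.cos θ * u 1) := by
  have hun : (0:ℝ) < ‖u‖ := norm_pos_iff.mpr hu
  have hvn : (0:ℝ) < ‖v‖ := norm_pos_iff.mpr hv
  have hcos := InnerProductGeometry.cos_angle u v
  rw [ha] at hcos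
  have hinner : (inner ℝ u v : ℝ) = ‖u‖ * ‖v‖ * Real.cos θ := by
    rw [inner2] at hcos ⊢; field_simp at hcos; linear_combination -hcos
  have hsin : 0 < Real.sin θ := Real.sin_pos_of_pos_of_lt_pi hθ1 hθ2
  have hsq : detv u v ^ 2 = (‖u‖ * ‖v‖ * Real.sin θ)^2 := by
    have h1 : detv u v ^2 + (inner ℝ u v : ℝ)^2 = ‖u‖^2 * ‖v‖^2 := by
      simp only [detv]; rw [inner2, normsq2, normsq2]; ring
    have h2 : Real.sin θ ^2 = 1 - Real.cos θ ^2 := by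
      have := Real.sin_sq_add_cos_sq θ; linarith
    rw [hinner] at h1
    nlinarith [h1, h2]
  have hdet : detv u v = ‖u‖ * ‖v‖ * Real.sin θ := by
    nlinarith [hd, mul_pos (mul_pos hun hvn) hsin, hsq]
  have hinner' : u 0 * v 0 + u 1 * v 1 = ‖u‖ * ‖v‖ * Real.cos θ := by
    rw [← inner2]; exact hinner
  have hdet' : u 0 * v 1 - u 1 * v 0 = ‖u‖ * ‖v‖ * Real.sin θ := hdet
  have hN : ‖u‖^2 = u 0^2 + u 1^2 := normsq2 u
  constructor
  · linear_combination u 0 * hinner' - u 1 * hdet' + v 0 * hN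
  · linear_combination u 1 * hinner' + u 0 * hdet' + v 1 * hN

lemma key_angle (n : ℕ) (hn : 1 ≤ n) (p : ℕ → EuclideanSpace ℝ (Fin 2)) (θ : ℕ → ℝ)
    (harc : IsLeftTurningArc p θ n) (i j : ℕ) (hij : i ≤ j) (hj : j ≤ n - 1) :
    (inner ℝ (p (i+1) - p i) (p (j+1) - p j) : ℝ) =
      ‖p (i+1) - p i‖ * ‖p (j+1) - p j‖ * Real.cos (∑ m ∈ Icc (i+1) j, θ m) ∧
    detv (p (i+1) - p i) (p (j+1) - p j) =
      ‖p (i+1) - p i‖ * ‖p (j+1) - p j‖ * Real.sin (∑ m ∈ Icc (i+1) j, θ m) := by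
  induction j, hij using Nat.le_induction with
  | base =>
    have hsum : (∑ m ∈ Icc (i+1) i, θ m) = 0 := by
      rw [Finset.Icc_eq_empty (by omega)]; simp
    rw [hsum, Real.cos_zero, Real.sin_zero]
    constructor
    · rw [real_inner_self_eq_norm_sq]; ring
    · simp only [detv]; ring
  | succ j hij IH =>
    have hj' : j ≤ n - 1 := by omega
    obtain ⟨IH1, IH2⟩ := IH hj'
    have hang := harc.2 (j+1) (by omega) hj
    simp only [Nat.add_sub_cancel] at hang
    obtain ⟨ht1, ht2, hd, ha⟩ := hang
    have hu : p (j+1) - p j ≠ 0 := sub_ne_zero.mpr (harc.1 j (by omega))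
    have hv : p (j+1+1) - p (j+1) ≠ 0 := sub_ne_zero.mpr (harc.1 (j+1) (by omega))
    obtain ⟨H0, H1⟩ := rot_formula _ _ _ hu hv hd ht1 ht2 ha
    have hsum : (∑ m ∈ Icc (i+1) (j+1), θ m) = (∑ m ∈ Icc (i+1) j, θ m) + θ (j+1) := by
      rw [Finset.sum_Icc_succ_top (by omega)]
    set S := ∑ m ∈ Icc (i+1) j, θ m with hS
    rw [hsum, Real.cos_add, Real.sin_add]
    set ei := p (i+1) - p i
    set ej := p (j+1) - p j
    set ek := p (j+1+1) - p (j+1)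
    rw [inner2] at IH1 ⊢
    simp only [detv] at IH2 ⊢
    have hne : ‖ej‖ ≠ 0 := norm_ne_zero_iff.mpr hu
    have hN : ‖ej‖^2 = ej 0^2 + ej 1^2 := normsq2 ej
    constructor
    · have key : ‖ej‖^2 * (ei 0 * ek 0 + ei 1 * ek 1) =
          ‖ej‖^2 * (‖ei‖ * ‖ek‖ * (Real.cos S * Real.cos (θ (j+1)) - Real.sin S * Real.sin (θ (j+1)))) := by
        linear_combination ei 0 * H0 + ei 1 * H1 +
          (‖ej‖ * ‖ek‖ * Real.cos (θ (j+1))) * IH1 -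
          (‖ej‖ * ‖ek‖ * Real.sin (θ (j+1))) * IH2
      exact mul_left_cancel₀ (pow_ne_zero 2 hne) key
    · have key : ‖ej‖^2 * (ei 0 * ek 1 - ei 1 * ek 0) =
          ‖ej‖^2 * (‖ei‖ * ‖ek‖ * (Real.sin S * Real.cos (θ (j+1)) + Real.cos S * Real.sin (θ (j+1)))) := by
        linear_combination ei 0 * H1 - ei 1 * H0 +
          (‖ej‖ * ‖ek‖ * Real.sin (θ (j+1))) * IH1 +
          (‖ej‖ * ‖ek‖ * Real.cos (θ (j+1))) * IH2
      exact mul_left_cancel₀ (pow_ne_zero 2 hne) key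

lemma inner_nonneg_edges (n : ℕ) (hn : 1 ≤ n) (p : ℕ → EuclideanSpace ℝ (Fin 2)) (θ : ℕ → ℝ)
    (harc : IsLeftTurningArc p θ n)
    (hcurv : (∑ j ∈ Finset.Icc 1 (n - 1), θ j) ≤ Real.pi / 2)
    (i j : ℕ) (hij : i ≤ j) (hj : j ≤ n - 1) :
    0 ≤ (inner ℝ (p (i+1) - p i) (p (j+1) - p j) : ℝ) := by
  obtain ⟨h1, _⟩ := key_angle n hn p θ harc i j hij hj
  rw [h1]
  have hpos : ∀ m ∈ Finset.Icc 1 (n-1), 0 ≤ θ m := fun m hm => by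
    rw [Finset.mem_Icc] at hm; exact le_of_lt (harc.2 m hm.1 hm.2).1
  have hsub : Finset.Icc (i+1) j ⊆ Finset.Icc 1 (n-1) := by
    intro m hm; rw [Finset.mem_Icc] at hm ⊢; omega
  have hS0 : 0 ≤ ∑ m ∈ Icc (i+1) j, θ m :=
    Finset.sum_nonneg fun m hm => hpos m (hsub hm)
  have hS1 : (∑ m ∈ Icc (i+1) j, θ m) ≤ Real.pi / 2 :=
    le_trans (Finset.sum_le_sum_of_subset_of_nonneg hsub
      (fun m hm _ => hpos m hm)) hcurv
  have hcos : 0 ≤ Real.cos (∑ m ∈ Icc (i+1) j, θ m) :=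
    Real.cos_nonneg_of_mem_Icc ⟨by linarith [Real.pi_pos], hS1⟩
  exact mul_nonneg (mul_nonneg (norm_nonneg _) (norm_nonneg _)) hcos

lemma inner_base_nonneg (n : ℕ) (hn : 1 ≤ n) (p : ℕ → EuclideanSpace ℝ (Fin 2)) (θ : ℕ → ℝ)
    (harc : IsLeftTurningArc p θ n)
    (hcurv : (∑ j ∈ Finset.Icc 1 (n - 1), θ j) ≤ Real.pi / 2)
    (j : ℕ) (hj : j ≤ n - 1) :
    0 ≤ (inner ℝ (p j - p 0) (p (j+1) - p j) : ℝ) := by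
  have hsum : p j - p 0 = ∑ i ∈ Finset.range j, (p (i+1) - p i) := (Finset.sum_range_sub p j).symm
  rw [hsum, sum_inner]
  exact Finset.sum_nonneg fun i hi => by
    rw [Finset.mem_range] at hi
    exact inner_nonneg_edges n hn p θ harc hcurv i j (by omega) hj

lemma edge_mono (q a v : EuclideanSpace ℝ (Fin 2)) (hv : v ≠ 0)
    (hav : 0 ≤ (inner ℝ (a - q) v : ℝ)) (s t : ℝ) (hs : 0 ≤ s) (hst : s ≤ t) :
    ‖a + s • v - q‖ ≤ ‖a + t • v - q‖ ∧ (s < t → ‖a + s • v - q‖ < ‖a + t • v - q‖) := by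
  have hvn : (0:ℝ) < ‖v‖ := norm_pos_iff.mpr hv
  have hexp : ∀ r : ℝ, ‖a + r • v - q‖^2 = ‖a - q‖^2 + 2 * r * (inner ℝ (a - q) v : ℝ) + r^2 * ‖v‖^2 := by
    intro r
    have : a + r • v - q = (a - q) + r • v := by abel
    rw [this, norm_add_sq_real, real_inner_smul_right, norm_smul]
    simp [mul_pow, sq_abs]
    ring
  have h1 := hexp s
  have h2 := hexp t
  have hns : (0:ℝ) ≤ ‖a + s • v - q‖ := norm_nonneg _
  have hnt : (0:ℝ) ≤ ‖a + t • v - q‖ := norm_nonneg _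
  constructor
  · have hsq : ‖a + s • v - q‖^2 ≤ ‖a + t • v - q‖^2 := by
      nlinarith [mul_nonneg (sub_nonneg.mpr hst) hav,
        mul_nonneg (mul_nonneg (sub_nonneg.mpr hst) (by linarith : (0:ℝ) ≤ t + s)) (sq_nonneg ‖v‖)]
    have := Real.sqrt_le_sqrt hsq
    rwa [Real.sqrt_sq hns, Real.sqrt_sq hnt] at this
  · intro hlt
    have hsq : ‖a + s • v - q‖^2 < ‖a + t • v - q‖^2 := by
      nlinarith [mul_nonneg (sub_nonneg.mpr hst) hav,
        mul_pos (mul_pos (sub_pos.mpr hlt) (by linarith : (0:ℝ) < t + s)) (mul_pos hvn hvn)]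
    have := Real.sqrt_lt_sqrt (sq_nonneg _) hsq
    rwa [Real.sqrt_sq hns, Real.sqrt_sq hnt] at this

lemma edge_mono' (n : ℕ) (hn : 1 ≤ n) (p : ℕ → EuclideanSpace ℝ (Fin 2)) (θ : ℕ → ℝ)
    (harc : IsLeftTurningArc p θ n)
    (hcurv : (∑ j ∈ Finset.Icc 1 (n - 1), θ j) ≤ Real.pi / 2)
    (j : ℕ) (hj : j ≤ n - 1) (s t : ℝ) (hs : 0 ≤ s) (hst : s ≤ t) :
    ‖p j + s • (p (j+1) - p j) - p 0‖ ≤ ‖p j + t • (p (j+1) - p j) - p 0‖ ∧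
    (s < t → ‖p j + s • (p (j+1) - p j) - p 0‖ < ‖p j + t • (p (j+1) - p j) - p 0‖) :=
  edge_mono (p 0) (p j) _ (sub_ne_zero.mpr (harc.1 j (by omega)))
    (inner_base_nonneg n hn p θ harc hcurv j hj) s t hs hst

lemma vertex_endpoint (p : ℕ → EuclideanSpace ℝ (Fin 2)) (j : ℕ) :
    p j + (1:ℝ) • (p (j+1) - p j) = p (j+1) := by
  rw [one_smul]; abel

lemma vertex_start (p : ℕ → EuclideanSpace ℝ (Fin 2)) (j : ℕ) :
    p j + (0:ℝ) • (p (j+1) - p j) = p j := by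
  rw [zero_smul]; abel

lemma vertex_mono (n : ℕ) (hn : 1 ≤ n) (p : ℕ → EuclideanSpace ℝ (Fin 2)) (θ : ℕ → ℝ)
    (harc : IsLeftTurningArc p θ n)
    (hcurv : (∑ j ∈ Finset.Icc 1 (n - 1), θ j) ≤ Real.pi / 2)
    (j k : ℕ) (hjk : j ≤ k) (hk : k ≤ n) :
    ‖p j - p 0‖ ≤ ‖p k - p 0‖ ∧ (j < k → ‖p j - p 0‖ < ‖p k - p 0‖) := by
  induction k, hjk using Nat.le_induction with
  | base => exact ⟨le_refl _, fun h => absurd h (lt_irrefl j)⟩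
  | succ k hjk IH =>
    obtain ⟨IH1, IH2⟩ := IH (by omega)
    have hstep := edge_mono' n hn p θ harc hcurv k (by omega) 0 1 le_rfl zero_le_one
    rw [vertex_endpoint, vertex_start] at hstep
    have hs : ‖p k - p 0‖ < ‖p (k+1) - p 0‖ := hstep.2 zero_lt_one
    exact ⟨le_trans IH1 (le_of_lt hs), fun _ => lt_of_le_of_lt IH1 hs⟩

theorem radially_monotone_of_curvature_le_halfpi
    (n : ℕ) (hn : 1 ≤ n) (p : ℕ → EuclideanSpace ℝ (Fin 2)) (θ : ℕ → ℝ)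
    (harc : IsLeftTurningArc p θ n)
    (hcurv : (∑ j ∈ Finset.Icc 1 (n - 1), θ j) ≤ Real.pi / 2) :
    ∀ j k, j ≤ n - 1 → k ≤ n - 1 →
      ∀ x ∈ segment ℝ (p j) (p (j + 1)), ∀ y ∈ segment ℝ (p k) (p (k + 1)),
        (j < k ∨ (j = k ∧ x ∈ segment ℝ (p j) y)) →
          ‖x - p 0‖ ≤ ‖y - p 0‖ ∧ (x ≠ y → ‖x - p 0‖ < ‖y - p 0‖) := by
  intro j k hj hk x hx y hy hcase
  rw [segment_eq_image'] at hx hy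
  obtain ⟨tx, htx, hxe⟩ := hx
  obtain ⟨ty, hty, hye⟩ := hy
  rw [Set.mem_Icc] at htx hty
  subst hxe hye
  beta_reduce at *
  rcases hcase with hlt | ⟨heq, hseg⟩
  · -- j < k
    have h1 := edge_mono' n hn p θ harc hcurv j hj tx 1 htx.1 htx.2
    rw [vertex_endpoint] at h1
    have h2 := vertex_mono n hn p θ harc hcurv (j+1) k (by omega) (by omega)
    have h3 := edge_mono' n hn p θ harc hcurv k hk 0 ty le_rfl hty.1
    rw [vertex_start] at h3
    constructor
    · exact le_trans h1.1 (le_trans h2.1 h3.1)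
    · intro hne
      rcases lt_or_eq_of_le htx.2 with htx1 | htx1
      · exact lt_of_lt_of_le (h1.2 htx1) (le_trans h2.1 h3.1)
      · subst htx1
        rcases Nat.lt_or_ge (j+1) k with hk1 | hk1
        · exact lt_of_le_of_lt h1.1 (lt_of_lt_of_le (h2.2 hk1) h3.1)
        · have hkeq : k = j + 1 := by omega
          subst hkeq
          rw [vertex_endpoint] at hne ⊢
          have hty0 : 0 < ty := by
            rcases lt_or_eq_of_le hty.1 with h | h
            · exact h
            · exfalso; apply hne; rw [← h, zero_smul, add_zero]
          exact h3.2 hty0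
  · -- j = k, x ∈ segment (p j) y
    subst heq
    rw [segment_eq_image'] at hseg
    obtain ⟨s, hs, hxe⟩ := hseg
    rw [Set.mem_Icc] at hs
    simp only [add_sub_cancel_left, smul_smul] at hxe
    rw [← hxe]
    have hst : s * ty ≤ ty := by nlinarith [hs.1, hs.2, hty.1]
    have hst0 : 0 ≤ s * ty := mul_nonneg hs.1 hty.1
    have hmono := edge_mono' n hn p θ harc hcurv j hj (s * ty) ty hst0 hst
    refine ⟨hmono.1, fun hne => ?_⟩
    have : s * ty < ty := by
      rcases lt_or_eq_of_le hst with h | h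
      · exact h
      · exfalso; apply hne; rw [h]
    exact hmono.2 this
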